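/- Let γ ∈ (0,2). The function z ↦ (1 − cos z)·|z|^{−1−γ} is integrable on ℝ ∖ {0}, and for every ξ ∈ ℝ one has ∫_{ℝ} (1 − cos(ξ z))·|z|^{−1−γ} dz = |ξ|^γ · ∫_{ℝ} (1 − cos z)·|z|^{−1−γ} dz. -/

import Mathlib

open MeasureTheory Set Real

private lemma one_sub_cos_le_sq (x : ℝ) : 1 - Real.cos x ≤ x ^ 2 := by
  have h1 : Real.cos (x / 2) ^ 2 = 1 / 2 + Real.cos (2 * (x / 2)) / 2 := Real.cos_sq (x / 2)
  have h2 := Real.sin_sq_add_cos_sq (x / 2)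
  have h3 : Real.sin (x / 2) ^ 2 ≤ (x / 2) ^ 2 := Real.sin_sq_le_sq
  have : (2 : ℝ) * (x / 2) = x := by ring
  rw [this] at h1
  nlinarith

private lemma g_integrable (γ : ℝ) (hγ : γ ∈ Set.Ioo (0 : ℝ) 2) :
    Integrable (fun z : ℝ => (1 - Real.cos z) * |z| ^ (-1 - γ)) volume := by
  obtain ⟨hγ0, hγ2⟩ := hγ
  set g : ℝ → ℝ := fun z => (1 - Real.cos z) * |z| ^ (-1 - γ) with hg
  have hm : Measurable g := by
    rw [hg]; fun_prop
  -- integrable on (0,1)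
  have hIoo : IntegrableOn g (Ioo (0:ℝ) 1) := by
    have hint : IntegrableOn (fun z : ℝ => z ^ (1 - γ)) (Ioo (0:ℝ) 1) :=
      (intervalIntegral.integrableOn_Ioo_rpow_iff one_pos).2 (by linarith)
    refine Integrable.mono' hint hm.aestronglyMeasurable ?_
    refine (ae_restrict_iff' measurableSet_Ioo).2 (Filter.Eventually.of_forall fun z hz => ?_)
    obtain ⟨hz0, _⟩ := hz
    have habs : |z| = z := abs_of_pos hz0
    have h1 : 0 ≤ 1 - Real.cos z := by nlinarith [Real.cos_le_one z]
    have h2 : (0:ℝ) ≤ z ^ (-1 - γ) := Real.rpow_nonneg hz0.le _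
    rw [hg]
    simp only [habs]
    rw [Real.norm_of_nonneg (mul_nonneg h1 h2)]
    calc (1 - Real.cos z) * z ^ (-1 - γ) ≤ z ^ 2 * z ^ (-1 - γ) := by
          exact mul_le_mul_of_nonneg_right (one_sub_cos_le_sq z) h2
      _ = z ^ (1 - γ) := by
          rw [← Real.rpow_natCast z 2, ← Real.rpow_add hz0]
          norm_num
          rw [show (2:ℝ) + (-1 - γ) = 1 - γ by ring]
  -- integrable on [1,∞)
  have hIci : IntegrableOn g (Ici (1:ℝ)) := by
    refine IntegrableOn.congr_set_ae ?_ (MeasureTheory.Ioi_ae_eq_Ici (a := (1:ℝ))).symm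
    have hint : IntegrableOn (fun z : ℝ => 2 * z ^ (-1 - γ)) (Ioi (1:ℝ)) :=
      (integrableOn_Ioi_rpow_of_lt (by linarith) one_pos).const_mul 2
    refine Integrable.mono' hint hm.aestronglyMeasurable ?_
    refine (ae_restrict_iff' measurableSet_Ioi).2 (Filter.Eventually.of_forall fun z hz => ?_)
    have hz0 : (0:ℝ) < z := lt_trans one_pos hz
    have habs : |z| = z := abs_of_pos hz0
    have h1 : 0 ≤ 1 - Real.cos z := by nlinarith [Real.cos_le_one z]
    have h1' : 1 - Real.cos z ≤ 2 := by nlinarith [Real.neg_one_le_cos z]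
    have h2 : (0:ℝ) ≤ z ^ (-1 - γ) := Real.rpow_nonneg hz0.le _
    rw [hg]
    simp only [habs]
    rw [Real.norm_of_nonneg (mul_nonneg h1 h2)]
    exact mul_le_mul_of_nonneg_right h1' h2
  have hIoi : IntegrableOn g (Ioi (0:ℝ)) := by
    rw [← Set.Ioo_union_Ici_eq_Ioi (zero_lt_one)]
    exact hIoo.union hIci
  have hIic : IntegrableOn g (Iic (0:ℝ)) := by
    rw [← Measure.map_neg_eq_self (volume : Measure ℝ)]
    have m : MeasurableEmbedding fun x : ℝ => -x :=
      (Homeomorph.neg ℝ).measurableEmbedding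
    rw [m.integrableOn_map_iff]
    have : (g ∘ fun x : ℝ => -x) = g := by
      funext x; simp [hg, Real.cos_neg, abs_neg]
    rw [this]
    have hpre : (fun x : ℝ => -x) ⁻¹' Iic 0 = Ici 0 := by
      ext x; simp
    rw [hpre]
    exact Iff.mpr integrableOn_Ici_iff_integrableOn_Ioi hIoi
  rw [← integrableOn_univ, ← Set.Iic_union_Ioi (a := (0:ℝ))]
  exact hIic.union hIoi

/-- **Scaling form of the Lévy–Khintchine formula** for the symmetric γ-stable
Lévy measure `ν_γ(dz) = c_γ |z|^{-1-γ} dz`: the function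
`z ↦ (1 - cos z) |z|^{-1-γ}` is integrable on `ℝ \ {0}`, and for every `ξ`,
`∫ (1 - cos (ξ z)) |z|^{-1-γ} dz = |ξ|^γ ∫ (1 - cos z) |z|^{-1-γ} dz`. -/
theorem levy_khintchine_scaling (γ : ℝ) (hγ : γ ∈ Set.Ioo (0 : ℝ) 2) :
    IntegrableOn (fun z : ℝ => (1 - Real.cos z) * |z| ^ (-1 - γ)) {0}ᶜ volume ∧
    ∀ ξ : ℝ,
      (∫ z : ℝ, (1 - Real.cos (ξ * z)) * |z| ^ (-1 - γ))
        = |ξ| ^ γ * ∫ z : ℝ, (1 - Real.cos z) * |z| ^ (-1 - γ) := by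
  obtain ⟨hγ0, hγ2⟩ := hγ
  have hInt := g_integrable γ ⟨hγ0, hγ2⟩
  refine ⟨hInt.integrableOn, fun ξ => ?_⟩
  by_cases hξ : ξ = 0
  · subst hξ
    simp [Real.zero_rpow hγ0.ne']
  · have habsξ : (0:ℝ) < |ξ| := abs_pos.mpr hξ
    have hexp : -1 - γ ≠ 0 := by linarith
    have key : ∀ z : ℝ, (1 - Real.cos (ξ * z)) * |z| ^ (-1 - γ)
        = |ξ| ^ (1 + γ) * ((1 - Real.cos (ξ * z)) * |ξ * z| ^ (-1 - γ)) := by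
      intro z
      by_cases hz : z = 0
      · subst hz
        simp [Real.zero_rpow hexp]
      · have hz' : (0:ℝ) < |z| := abs_pos.mpr hz
        rw [abs_mul, Real.mul_rpow (abs_nonneg ξ) (abs_nonneg z)]
        have : |ξ| ^ (1 + γ) * |ξ| ^ (-1 - γ) = 1 := by
          rw [← Real.rpow_add habsξ]
          norm_num
        calc (1 - Real.cos (ξ * z)) * |z| ^ (-1 - γ)
            = (|ξ| ^ (1 + γ) * |ξ| ^ (-1 - γ)) * ((1 - Real.cos (ξ * z)) * |z| ^ (-1 - γ)) := by
              rw [this]; ring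
          _ = |ξ| ^ (1 + γ) * ((1 - Real.cos (ξ * z)) * (|ξ| ^ (-1 - γ) * |z| ^ (-1 - γ))) := by
              ring
    simp_rw [key]
    rw [MeasureTheory.integral_const_mul]
    have := MeasureTheory.Measure.integral_comp_mul_left
      (fun u : ℝ => (1 - Real.cos u) * |u| ^ (-1 - γ)) ξ
    rw [this]
    rw [smul_eq_mul, abs_inv, ← mul_assoc]
    congr 1
    rw [← Real.rpow_neg_one |ξ|, ← Real.rpow_add habsξ]
    norm_num
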